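/- Let T be a strictly positive linear order-continuous averaging operator on a Riesz space E which is an R(T)-module, where R(T) is the range of T. Then the map f ↦ T|f| is an R(T)-valued norm: it vanishes only at 0, satisfies T|gf| = |g|·T|f| for all g ∈ R(T), and satisfies the triangle inequality T|f+h| ≤ T|f| + T|h|. -/

import Mathlib

section Aux
variable {E : Type*} [Lattice E] [CommRing E] [CovariantClass E E (· + ·) (· ≤ ·)]

lemma aux_inf_add_inf_ge (u v z : E) (hu : 0 ≤ u) (hv : 0 ≤ v) (hz : 0 ≤ z) :
    (u + v) ⊓ z ≤ u ⊓ z + v ⊓ z := by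
  have h1 : u ⊓ z + v ⊓ z = ((u + v) ⊓ (u + z)) ⊓ ((z + v) ⊓ (z + z)) := by
    rw [add_inf, inf_add, inf_add]
    ac_rfl
  rw [h1]
  exact le_inf (le_inf inf_le_left (inf_le_of_right_le (le_add_of_nonneg_left hu)))
    (le_inf (inf_le_of_right_le (le_add_of_nonneg_right hv))
      (inf_le_of_right_le (le_add_of_nonneg_left hz)))

lemma aux_abs_mul
    (hmulpos : ∀ a b : E, 0 ≤ a → 0 ≤ b → 0 ≤ a * b)
    (hfalg : ∀ a b : E, a ⊓ b = 0 → ∀ w : E, 0 ≤ w → (w * a) ⊓ b = 0 ∧ (a * w) ⊓ b = 0)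
    (a b : E) : |a * b| = |a| * |b| := by
  have hp : ∀ x : E, (0:E) ≤ x⁺ := posPart_nonneg
  have hn : ∀ x : E, (0:E) ≤ x⁻ := negPart_nonneg
  -- pairwise disjointness
  have d1 : (a⁺ * b⁺) ⊓ (a⁺ * b⁻) = 0 := by
    have h0 : b⁺ ⊓ b⁻ = 0 := posPart_inf_negPart_eq_zero b
    have h1 : (a⁺ * b⁺) ⊓ b⁻ = 0 := (hfalg b⁺ b⁻ h0 a⁺ (hp a)).1
    have h2 : b⁻ ⊓ (a⁺ * b⁺) = 0 := by rw [inf_comm]; exact h1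
    have := (hfalg b⁻ (a⁺ * b⁺) h2 a⁺ (hp a)).1
    rw [inf_comm]; exact this
  have d2 : (a⁺ * b⁺) ⊓ (a⁻ * b⁺) = 0 := by
    have h0 : a⁺ ⊓ a⁻ = 0 := posPart_inf_negPart_eq_zero a
    have h1 : (b⁺ * a⁺) ⊓ a⁻ = 0 := (hfalg a⁺ a⁻ h0 b⁺ (hp b)).1
    have h2 : a⁻ ⊓ (b⁺ * a⁺) = 0 := by rw [inf_comm]; exact h1
    have := (hfalg a⁻ (b⁺ * a⁺) h2 b⁺ (hp b)).1
    rw [inf_comm, mul_comm a⁺ b⁺, mul_comm a⁻ b⁺]; exact this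
  have d3 : (a⁻ * b⁻) ⊓ (a⁺ * b⁻) = 0 := by
    have h0 : a⁻ ⊓ a⁺ = 0 := by rw [inf_comm]; exact posPart_inf_negPart_eq_zero a
    have h1 : (b⁻ * a⁻) ⊓ a⁺ = 0 := (hfalg a⁻ a⁺ h0 b⁻ (hn b)).1
    have h2 : a⁺ ⊓ (b⁻ * a⁻) = 0 := by rw [inf_comm]; exact h1
    have := (hfalg a⁺ (b⁻ * a⁻) h2 b⁻ (hn b)).1
    rw [inf_comm, mul_comm a⁻ b⁻, mul_comm a⁺ b⁻]; exact this
  have d4 : (a⁻ * b⁻) ⊓ (a⁻ * b⁺) = 0 := by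
    have h0 : b⁻ ⊓ b⁺ = 0 := by rw [inf_comm]; exact posPart_inf_negPart_eq_zero b
    have h1 : (a⁻ * b⁻) ⊓ b⁺ = 0 := (hfalg b⁻ b⁺ h0 a⁻ (hn a)).1
    have h2 : b⁺ ⊓ (a⁻ * b⁻) = 0 := by rw [inf_comm]; exact h1
    have := (hfalg b⁺ (a⁻ * b⁻) h2 a⁻ (hn a)).1
    rw [inf_comm]; exact this
  set X := a⁺ * b⁺ + a⁻ * b⁻ with hX
  set Y := a⁺ * b⁻ + a⁻ * b⁺ with hY
  have hXpos : 0 ≤ X := add_nonneg (hmulpos _ _ (hp a) (hp b)) (hmulpos _ _ (hn a) (hn b))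
  have hYpos : 0 ≤ Y := add_nonneg (hmulpos _ _ (hp a) (hn b)) (hmulpos _ _ (hn a) (hp b))
  have hXd1 : X ⊓ (a⁺ * b⁻) = 0 := by
    have := aux_inf_add_inf_ge (a⁺ * b⁺) (a⁻ * b⁻) (a⁺ * b⁻)
      (hmulpos _ _ (hp a) (hp b)) (hmulpos _ _ (hn a) (hn b)) (hmulpos _ _ (hp a) (hn b))
    rw [d1, d3, add_zero] at this
    exact le_antisymm this (le_inf hXpos (hmulpos _ _ (hp a) (hn b)))
  have hXd2 : X ⊓ (a⁻ * b⁺) = 0 := by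
    have := aux_inf_add_inf_ge (a⁺ * b⁺) (a⁻ * b⁻) (a⁻ * b⁺)
      (hmulpos _ _ (hp a) (hp b)) (hmulpos _ _ (hn a) (hn b)) (hmulpos _ _ (hn a) (hp b))
    rw [d2, d4, add_zero] at this
    exact le_antisymm this (le_inf hXpos (hmulpos _ _ (hn a) (hp b)))
  have hXd1' : (a⁺ * b⁻) ⊓ X = 0 := by rw [inf_comm]; exact hXd1
  have hXd2' : (a⁻ * b⁺) ⊓ X = 0 := by rw [inf_comm]; exact hXd2
  have hXY : X ⊓ Y = 0 := by
    have h1 := aux_inf_add_inf_ge (a⁺ * b⁻) (a⁻ * b⁺) X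
      (hmulpos _ _ (hp a) (hn b)) (hmulpos _ _ (hn a) (hp b)) hXpos
    rw [hXd1', hXd2', add_zero] at h1
    rw [inf_comm] at h1
    exact le_antisymm h1 (le_inf hXpos hYpos)
  -- a*b = X - Y, |a|*|b| = X + Y
  have hab : a * b = X - Y := by
    have := congrArg₂ (· * ·) (posPart_sub_negPart a) (posPart_sub_negPart b)
    rw [← this, hX, hY]; ring
  have habs : |a| * |b| = X + Y := by
    have := congrArg₂ (· * ·) (posPart_add_negPart a) (posPart_add_negPart b)
    rw [← this, hX, hY]; ring
  -- |X - Y| = X + Y when X ⊓ Y = 0, X,Y ≥ 0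
  have key : |X - Y| = X + Y := by
    have hsup : X ⊔ Y = X + Y := by
      have := inf_add_sup X Y
      rw [hXY, zero_add] at this
      exact this
    have hposPart : (X - Y)⁺ = X := by
      rw [posPart_def]
      have : (X - Y) ⊔ 0 = (X ⊔ Y) - Y := by
        rw [sup_sub]
        simp
      rw [this, hsup]
      simp
    have hnegPart : (X - Y)⁻ = Y := by
      rw [negPart_def]
      have : (-(X - Y)) ⊔ 0 = (Y ⊔ X) - X := by
        rw [sup_sub]
        have h2 : -(X - Y) = Y - X := by ring
        rw [h2]
        simp
      rw [this, sup_comm Y X, hsup]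
      simp
    rw [← posPart_add_negPart (X - Y), hposPart, hnegPart]
  rw [hab, key, habs]

end Aux


/-- If `T` is a strictly positive, order-continuous, averaging conditional
expectation operator on a Riesz space `E` which is an `R(T)`-module, then `f ↦ T|f|`
is an `R(T)`-valued norm: it vanishes only at `0`, satisfies `T|g·f| = |g|·T|f|` for
`g ∈ R(T)`, and satisfies the triangle inequality. -/
theorem T_abs_is_RT_valued_norm {E : Type*} [Lattice E] [CommRing E]
    [CovariantClass E E (· + ·) (· ≤ ·)] [Module ℝ E]
    -- f-algebra structure on the ambient space
    (hmulpos : ∀ a b : E, 0 ≤ a → 0 ≤ b → 0 ≤ a * b)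
    (hfalg : ∀ a b : E, a ⊓ b = 0 → ∀ w : E, 0 ≤ w → (w * a) ⊓ b = 0 ∧ (a * w) ⊓ b = 0)
    (T : E →ₗ[ℝ] E)
    -- T is positive
    (hTpos : ∀ f : E, 0 ≤ f → 0 ≤ T f)
    -- T is a projection
    (hTproj : ∀ f : E, T (T f) = T f)
    -- T is strictly positive
    (hTsp : ∀ f : E, T |f| = 0 → f = 0)
    -- T is order continuous
    (hToc : ∀ (A : Set E) (a : E), A.Nonempty → DirectedOn (· ≤ ·) A → IsLUB A a →
      IsLUB (T '' A) (T a))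
    -- T is an averaging operator
    (hTav : ∀ g f : E, g ∈ Set.range T → T (g * f) = g * T f) :
    (∀ f : E, T |f| = 0 ↔ f = 0) ∧
    (∀ f : E, T |f| ∈ Set.range T ∧ 0 ≤ T |f|) ∧
    (∀ g f : E, g ∈ Set.range T → T |g * f| = |g| * T |f|) ∧
    (∀ f h : E, T |f + h| ≤ T |f| + T |h|) := by
  have hmono : ∀ f h : E, f ≤ h → T f ≤ T h := by
    intro f h hfh
    have := hTpos (h - f) (sub_nonneg.2 hfh)
    rw [map_sub] at this
    exact sub_nonneg.1 this
  refine ⟨fun f => ⟨hTsp f, ?_⟩, fun f => ⟨⟨|f|, rfl⟩, hTpos _ (abs_nonneg f)⟩, ?_, ?_⟩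
  · rintro rfl; simp
  · intro g f hg
    have habsr : T |g| = |g| := by
      obtain ⟨x, rfl⟩ := hg
      have h1 : |T x| ≤ T |T x| := by
        rw [abs_le']
        constructor
        · calc T x = T (T x) := (hTproj x).symm
            _ ≤ T |T x| := hmono _ _ (le_abs_self _)
        · calc -T x = T (-T x) := by rw [map_neg, hTproj]
            _ ≤ T |T x| := hmono _ _ (neg_le_abs _)
      have h2 : T (T |T x| - |T x|) = 0 := by
        rw [map_sub, hTproj, sub_self]
      have h3 : T (abs (T (abs (T x)) - abs (T x))) = 0 := by
        rw [abs_of_nonneg (sub_nonneg.2 h1)]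
        exact h2
      have := hTsp _ h3
      exact (sub_eq_zero.1 this)
    rw [aux_abs_mul hmulpos hfalg g f, hTav |g| |f| ⟨|g|, habsr⟩]
  · intro f h
    have := hmono _ _ (abs_add_le f h)
    rwa [map_add] at this
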